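/- One-step error recursion for the pure greedy/orthogonal greedy algorithm: in a Hilbert space, if g maximizes \langle g, r \rangle over a unit-norm dictionary D and \varphi - \varphi_{n-1} = r with \varphi \in L_1(D), then \langle g, r \rangle \geq \|r\|^2 / \|\varphi\|_{L_1(D)}, and hence \|r - \langle g, r\rangle g\|^2 \leq \|r\|^2 (1 - \|r\|^2/\|\varphi\|_{L_1(D)}^2). -/

import Mathlib

/-- One-step greedy recursion: if `r = φ - φ_{n-1}` is the residual of an
orthogonal projection (so `⟨r, φ - r⟩ = 0`), `φ ∈ L₁(D)` with variation norm
`K = sInf S`, and `g ∈ D` maximizes `⟨·, r⟩` over the symmetric unit-norm dictionary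
`D`, then `⟨g, r⟩ ≥ ‖r‖²/K` and `‖r - ⟨g, r⟩ g‖² ≤ ‖r‖² (1 - ‖r‖²/K²)`. -/
theorem stmt13 {V : Type*} [NormedAddCommGroup V] [InnerProductSpace ℝ V]
    [CompleteSpace V]
    (D : Set V) (hD : ∀ h ∈ D, ‖h‖ = 1) (hDsymm : ∀ h ∈ D, -h ∈ D)
    (φ r : V) (hperp : (inner ℝ r (φ - r) : ℝ) = 0)
    (S : Set ℝ)
    (hS : S = {M | ∃ (gs : ℕ → V) (c : ℕ → ℝ), (∀ k, gs k ∈ D) ∧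
      Summable (fun k => |c k|) ∧ HasSum (fun k => c k • gs k) φ ∧ M = ∑' k, |c k|})
    (hne : S.Nonempty)
    (g : V) (hg : g ∈ D) (hmax : ∀ h ∈ D, (inner ℝ h r : ℝ) ≤ inner ℝ g r) :
    ‖r‖ ^ 2 / sInf S ≤ (inner ℝ g r : ℝ) ∧
      ‖r - (inner ℝ g r : ℝ) • g‖ ^ 2 ≤ ‖r‖ ^ 2 * (1 - ‖r‖ ^ 2 / (sInf S) ^ 2) := by
  have hrφ : (inner ℝ r φ : ℝ) = ‖r‖ ^ 2 := by
    rw [inner_sub_right] at hperp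
    have h2 : (inner ℝ r r : ℝ) = ‖r‖ ^ 2 := real_inner_self_eq_norm_sq r
    linarith
  have ha0 : 0 ≤ (inner ℝ g r : ℝ) := by
    have := hmax (-g) (hDsymm g hg)
    rw [inner_neg_left] at this; linarith
  have key : ∀ M ∈ S, ‖r‖ ^ 2 ≤ M * (inner ℝ g r : ℝ) := by
    intro M hM
    rw [hS] at hM
    obtain ⟨gs, c, hgs, hsumm, hsum, rfl⟩ := hM
    have h1 : HasSum (fun k => c k * (inner ℝ r (gs k) : ℝ)) (inner ℝ r φ) := by
      have := hsum.mapL (innerSL ℝ r)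
      simpa [real_inner_smul_right] using this
    have hbound : ∀ k, c k * (inner ℝ r (gs k) : ℝ) ≤ |c k| * (inner ℝ g r : ℝ) := by
      intro k
      have h1' : (inner ℝ (gs k) r : ℝ) ≤ inner ℝ g r := hmax _ (hgs k)
      have h2' : (inner ℝ (-(gs k)) r : ℝ) ≤ inner ℝ g r := hmax _ (hDsymm _ (hgs k))
      rw [inner_neg_left] at h2'
      have habs : |(inner ℝ r (gs k) : ℝ)| ≤ (inner ℝ g r : ℝ) := by
        rw [real_inner_comm, abs_le]; constructor <;> linarith
      calc c k * (inner ℝ r (gs k) : ℝ) ≤ |c k * (inner ℝ r (gs k) : ℝ)| := le_abs_self _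
        _ = |c k| * |(inner ℝ r (gs k) : ℝ)| := abs_mul _ _
        _ ≤ |c k| * (inner ℝ g r : ℝ) := mul_le_mul_of_nonneg_left habs (abs_nonneg _)
    calc ‖r‖ ^ 2 = inner ℝ r φ := hrφ.symm
      _ = ∑' k, c k * (inner ℝ r (gs k) : ℝ) := h1.tsum_eq.symm
      _ ≤ ∑' k, |c k| * (inner ℝ g r : ℝ) :=
          Summable.tsum_le_tsum hbound h1.summable (hsumm.mul_right _)
      _ = (∑' k, |c k|) * (inner ℝ g r : ℝ) := tsum_mul_right
  by_cases hr : r = 0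
  · subst hr
    simp
  · have hrpos : 0 < ‖r‖ ^ 2 := pow_pos (norm_pos_iff.mpr hr) 2
    have ha : 0 < (inner ℝ g r : ℝ) := by
      rcases lt_or_eq_of_le ha0 with h | h
      · exact h
      · exfalso
        obtain ⟨M, hM⟩ := hne
        have := key M hM
        rw [← h] at this
        simp at this
        exact hr this
    have hle : ‖r‖ ^ 2 / (inner ℝ g r : ℝ) ≤ sInf S :=
      le_csInf hne fun M hM => (div_le_iff₀ ha).mpr (key M hM)
    have hK : 0 < sInf S := lt_of_lt_of_le (by positivity) hle
    have hfirst : ‖r‖ ^ 2 / sInf S ≤ (inner ℝ g r : ℝ) := by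
      rw [div_le_iff₀ hK]
      rw [div_le_iff₀ ha] at hle
      nlinarith
    refine ⟨hfirst, ?_⟩
    have hexp : ‖r - (inner ℝ g r : ℝ) • g‖ ^ 2 = ‖r‖ ^ 2 - (inner ℝ g r : ℝ) ^ 2 := by
      rw [norm_sub_sq_real, real_inner_smul_right, norm_smul, hD g hg,
        real_inner_comm r g]
      simp [abs_of_nonneg ha0]
      ring
    rw [hexp]
    have hsq : (‖r‖ ^ 2 / sInf S) ^ 2 ≤ (inner ℝ g r : ℝ) ^ 2 := by
      apply sq_le_sq' _ hfirst
      have : 0 ≤ ‖r‖ ^ 2 / sInf S := by positivity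
      linarith
    rw [div_pow] at hsq
    have hK2 : (0:ℝ) < (sInf S) ^ 2 := by positivity
    rw [div_le_iff₀ hK2] at hsq
    have h5 : ‖r‖ ^ 2 * (‖r‖ ^ 2 / sInf S ^ 2) ≤ (inner ℝ g r : ℝ) ^ 2 := by
      rw [mul_div_assoc', div_le_iff₀ hK2]
      nlinarith [hsq]
    rw [mul_sub, mul_one]
    linarith
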